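/- Suppose n ≥ 2, θ ≥ max(1, 2‖P‖L√n/μ), and let v : [0,∞) → ℝ be continuous and bounded. Let x, z : [0,∞) → ℝⁿ be differentiable functions satisfying, for all t ≥ 0: x′(t) = F(x(t)); z_i′(t) = f_i(z₁(t),…,z_i(t)) + z_{i+1}(t) + θⁱ k_i (z₁(t) − x₁(t) + v(t)) for i = 1,…,n−1; and z_n′(t) = f_n(z₁(t),…,z_n(t)) + θⁿ k_n (z₁(t) − x₁(t) + v(t)). Then for all t ≥ 0: |f₁(z₁(t)) + z₂(t) − f₁(x₁(t)) − x₂(t)| ≤ (L + θ)·√(K₂/K₁)·exp(−θμt/(4‖P‖))·‖z(0) − x(0)‖ + 2(L + θ)·(‖P‖‖k‖/μ)·√(K₂/K₁)·sup_{0≤τ≤t}|v(τ)|. -/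

import Mathlib

open Matrix
section helpers
variable {n : ℕ}


lemma dot_eq_inner (P : Matrix (Fin n) (Fin n) ℝ) (u w : Fin n → ℝ) :
    u ⬝ᵥ (P *ᵥ w) = @inner ℝ _ _ ((WithLp.equiv 2 (Fin n → ℝ)).symm u)
      (Matrix.toEuclideanCLM (𝕜 := ℝ) P ((WithLp.equiv 2 (Fin n → ℝ)).symm w)) := by
  rw [WithLp.equiv_symm_apply, Matrix.toEuclideanCLM_toLp]
  simp [PiLp.inner_apply, mul_comm, Matrix.toLin'_apply, dotProduct, mulVec]

lemma norm_toE (u : Fin n → ℝ) :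
    ‖(WithLp.equiv 2 (Fin n → ℝ)).symm u‖ = Real.sqrt (∑ i, u i ^ 2) := by
  rw [EuclideanSpace.norm_eq]
  congr 1; apply Finset.sum_congr rfl; intro i _; simp [WithLp.equiv_symm_apply, PiLp.toLp_apply, sq_abs]

lemma abs_dot_mulVec_le (P : Matrix (Fin n) (Fin n) ℝ) (u w : Fin n → ℝ) :
    |u ⬝ᵥ (P *ᵥ w)| ≤ ‖Matrix.toEuclideanCLM (𝕜 := ℝ) P‖ * Real.sqrt (∑ i, u i ^ 2)
      * Real.sqrt (∑ i, w i ^ 2) := by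
  rw [dot_eq_inner]
  calc |@inner ℝ _ _ ((WithLp.equiv 2 (Fin n → ℝ)).symm u)
        (Matrix.toEuclideanCLM (𝕜 := ℝ) P ((WithLp.equiv 2 (Fin n → ℝ)).symm w))| ≤ ‖(WithLp.equiv 2 (Fin n → ℝ)).symm u‖ *
        ‖Matrix.toEuclideanCLM (𝕜 := ℝ) P ((WithLp.equiv 2 (Fin n → ℝ)).symm w)‖ :=
        abs_real_inner_le_norm _ _
    _ ≤ ‖(WithLp.equiv 2 (Fin n → ℝ)).symm u‖ * (‖Matrix.toEuclideanCLM (𝕜 := ℝ) P‖ *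
        ‖(WithLp.equiv 2 (Fin n → ℝ)).symm w‖) := by
        gcongr; exact ContinuousLinearMap.le_opNorm _ _
    _ = _ := by rw [norm_toE, norm_toE]; ring

lemma sym_dot {P : Matrix (Fin n) (Fin n) ℝ} (hsym : ∀ i j, P i j = P j i)
    (u w : Fin n → ℝ) : u ⬝ᵥ (P *ᵥ w) = w ⬝ᵥ (P *ᵥ u) := by
  simp only [dotProduct, mulVec, Finset.mul_sum]
  rw [Finset.sum_comm]
  apply Finset.sum_congr rfl; intro i _; apply Finset.sum_congr rfl; intro j _
  rw [hsym j i]; ring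

lemma cs_psd {P : Matrix (Fin n) (Fin n) ℝ} (hsym : ∀ i j, P i j = P j i)
    (hpsd : ∀ u : Fin n → ℝ, 0 ≤ u ⬝ᵥ (P *ᵥ u)) (u w : Fin n → ℝ) :
    (u ⬝ᵥ (P *ᵥ w)) ^ 2 ≤ (u ⬝ᵥ (P *ᵥ u)) * (w ⬝ᵥ (P *ᵥ w)) := by
  have key : ∀ s : ℝ, 0 ≤ (w ⬝ᵥ (P *ᵥ w)) * (s * s) + (2 * (u ⬝ᵥ (P *ᵥ w))) * s
      + u ⬝ᵥ (P *ᵥ u) := by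
    intro s
    have h := hpsd (u + s • w)
    have expand : (u + s • w) ⬝ᵥ (P *ᵥ (u + s • w)) = (w ⬝ᵥ (P *ᵥ w)) * (s * s)
        + (2 * (u ⬝ᵥ (P *ᵥ w))) * s + u ⬝ᵥ (P *ᵥ u) := by
      rw [Matrix.mulVec_add, Matrix.mulVec_smul, dotProduct_add, add_dotProduct,
        add_dotProduct, dotProduct_smul, smul_dotProduct, smul_dotProduct,
        dotProduct_smul, sym_dot hsym w u]
      simp [smul_eq_mul]; ring
    linarith [h, expand ▸ h]
  have hd := discrim_le_zero key
  rw [discrim] at hd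
  nlinarith [hd]

lemma opnorm_le_of_quad {P : Matrix (Fin n) (Fin n) ℝ} {K₂ : ℝ} (hK₂ : 0 ≤ K₂)
    (hsym : ∀ i j, P i j = P j i)
    (hpsd : ∀ u : Fin n → ℝ, 0 ≤ u ⬝ᵥ (P *ᵥ u))
    (hub : ∀ u : Fin n → ℝ, u ⬝ᵥ (P *ᵥ u) ≤ K₂ * ∑ i, u i ^ 2) :
    ‖Matrix.toEuclideanCLM (𝕜 := ℝ) P‖ ≤ K₂ := by
  apply ContinuousLinearMap.opNorm_le_bound _ hK₂
  intro a
  set u : Fin n → ℝ := WithLp.equiv 2 (Fin n → ℝ) a with hu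
  have ha : a = (WithLp.equiv 2 (Fin n → ℝ)).symm u := rfl
  rw [ha, WithLp.equiv_symm_apply, Matrix.toEuclideanCLM_toLp, ← Matrix.toLin'_apply,
    ← WithLp.equiv_symm_apply, norm_toE, norm_toE]
  set w : Fin n → ℝ := P *ᵥ u with hw
  have hTw : Matrix.toLin' P u = w := Matrix.toLin'_apply P u
  rw [hTw]
  have hsq : ∑ i, w i ^ 2 ≤ K₂ ^ 2 * ∑ i, u i ^ 2 := by
    have hcs := cs_psd hsym hpsd w u
    have hww : w ⬝ᵥ (P *ᵥ u) = ∑ i, w i ^ 2 := by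
      rw [← hw]; simp [dotProduct, sq]
    rw [hww] at hcs
    have h1 := hub w
    have h2 := hub u
    have h3 := hpsd w
    have h4 := hpsd u
    have hS : (0:ℝ) ≤ ∑ i, w i ^ 2 :=
      Finset.sum_nonneg (fun i _ => sq_nonneg (w i))
    have hU : (0:ℝ) ≤ ∑ i, u i ^ 2 :=
      Finset.sum_nonneg (fun i _ => sq_nonneg (u i))
    have h5 : (∑ i, w i ^ 2) ^ 2 ≤ (K₂ * ∑ i, w i ^ 2) * (K₂ * ∑ i, u i ^ 2) :=
      le_trans hcs (mul_le_mul h1 h2 h4 (by positivity))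
    rcases eq_or_lt_of_le hS with h0 | h0
    · rw [← h0]; positivity
    · nlinarith [h5, h0]
  calc Real.sqrt (∑ i, w i ^ 2) ≤ Real.sqrt (K₂ ^ 2 * ∑ i, u i ^ 2) := Real.sqrt_le_sqrt hsq
    _ = K₂ * Real.sqrt (∑ i, u i ^ 2) := by
        rw [Real.sqrt_mul (sq_nonneg _), Real.sqrt_sq hK₂]

lemma gronwall_simple {g g' : ℝ → ℝ} {a C T : ℝ} (ha : 0 < a) (hC : 0 ≤ C) (hT : 0 ≤ T)
    (hg : ∀ t ∈ Set.Icc (0:ℝ) T, HasDerivAt g (g' t) t)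
    (hb : ∀ t ∈ Set.Icc (0:ℝ) T, g' t ≤ -a * g t + C) :
    g T ≤ Real.exp (-(a * T)) * g 0 + C / a := by
  set h : ℝ → ℝ := fun t => Real.exp (a * t) * (g t - C / a) with hh
  have hd : ∀ t ∈ Set.Icc (0:ℝ) T, HasDerivAt h
      (a * Real.exp (a * t) * (g t - C / a) + Real.exp (a * t) * g' t) t := by
    intro t ht
    have h1 : HasDerivAt (fun s => Real.exp (a * s)) (a * Real.exp (a * t)) t := by
      have := (Real.hasDerivAt_exp (a * t)).comp t ((hasDerivAt_id t).const_mul a)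
      simpa [mul_comm, Function.comp_def] using this
    have h2 : HasDerivAt (fun s => g s - C / a) (g' t) t := (hg t ht).sub_const _
    exact h1.mul h2
  have hanti : AntitoneOn h (Set.Icc 0 T) := by
    apply antitoneOn_of_deriv_nonpos (convex_Icc 0 T)
    · exact fun t ht => ((hd t ht).continuousAt).continuousWithinAt
    · intro t ht
      rw [interior_Icc] at ht
      exact ((hd t (Set.mem_Icc_of_Ioo ht)).differentiableAt).differentiableWithinAt
    · intro t ht
      rw [interior_Icc] at ht
      have ht' : t ∈ Set.Icc (0:ℝ) T := Set.mem_Icc_of_Ioo ht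
      rw [(hd t ht').deriv]
      have hbt := hb t ht'
      have he : (0:ℝ) < Real.exp (a * t) := Real.exp_pos _
      have : a * Real.exp (a * t) * (g t - C / a) + Real.exp (a * t) * g' t
          = Real.exp (a * t) * (g' t + a * g t - C) := by field_simp; ring
      rw [this]
      apply mul_nonpos_of_nonneg_of_nonpos he.le
      linarith
  have hle : h T ≤ h 0 := hanti (Set.left_mem_Icc.mpr hT) (Set.mem_Icc.mpr ⟨hT, le_refl T⟩) hT
  have heT : (0:ℝ) < Real.exp (a * T) := Real.exp_pos _
  have hexp : Real.exp (-(a * T)) = (Real.exp (a * T))⁻¹ := Real.exp_neg _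
  have h0 : h 0 = g 0 - C / a := by simp [hh]
  have hTval : h T = Real.exp (a * T) * (g T - C / a) := rfl
  rw [hTval, h0] at hle
  have hCa : 0 ≤ C / a := div_nonneg hC ha.le
  have h1 : Real.exp (-(a * T)) ≤ 1 := by
    rw [Real.exp_le_one_iff]; nlinarith
  rw [hexp]
  have key : g T - C / a ≤ (Real.exp (a * T))⁻¹ * (g 0 - C / a) := by
    rw [le_inv_mul_iff₀ (Real.exp_pos _)]
    linarith [hle]
  have : (Real.exp (a * T))⁻¹ * (g 0 - C / a) = (Real.exp (a * T))⁻¹ * g 0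
      - (Real.exp (a * T))⁻¹ * (C / a) := by ring
  rw [this] at key
  have h2 : (Real.exp (a * T))⁻¹ * (C / a) ≤ C / a := by
    rw [← hexp]
    nlinarith [hexp ▸ h1]
  have h3 : 0 ≤ (Real.exp (a * T))⁻¹ * (C / a) := mul_nonneg (inv_nonneg.mpr heT.le) hCa
  linarith

end helpers


lemma sqrt_add_le' {x y : ℝ} (hx : 0 ≤ x) (hy : 0 ≤ y) :
    Real.sqrt (x + y) ≤ Real.sqrt x + Real.sqrt y := by
  rw [show x + y = x + y from rfl]
  have h : x + y ≤ (Real.sqrt x + Real.sqrt y) ^ 2 := by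
    nlinarith [Real.sq_sqrt hx, Real.sq_sqrt hy, Real.sqrt_nonneg x, Real.sqrt_nonneg y]
  calc Real.sqrt (x + y) ≤ Real.sqrt ((Real.sqrt x + Real.sqrt y) ^ 2) := Real.sqrt_le_sqrt h
    _ = Real.sqrt x + Real.sqrt y := Real.sqrt_sq (by positivity)

set_option maxHeartbeats 2000000 in
/-- ISS estimate for the predictor term of the high-gain observer:
`|f₁(z₁(t)) + z₂(t) - f₁(x₁(t)) - x₂(t)| ≤ (L+θ) √(K₂/K₁) exp(-θμt/(4‖P‖)) ‖z(0)-x(0)‖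
  + 2(L+θ) (‖P‖‖k‖/μ) √(K₂/K₁) sup_{0≤τ≤t} |v(τ)|`. -/
theorem stmt8 (n : ℕ) (hn : 2 ≤ n) (L : ℝ) (hL : 0 ≤ L)
    (f : Fin n → (Fin n → ℝ) → ℝ)
    (hf0 : ∀ i, f i (fun _ => 0) = 0)
    (hfLip : ∀ i (x z : Fin n → ℝ), |f i x - f i z| ≤
      L * Real.sqrt (∑ j ∈ Finset.univ.filter (fun j => j ≤ i), (x j - z j) ^ 2))
    (A : Matrix (Fin n) (Fin n) ℝ)
    (hA : ∀ i j : Fin n, A i j = if (j : ℕ) = (i : ℕ) + 1 then 1 else 0)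
    (c : Fin n → ℝ) (hc : ∀ i, c i = if (i : ℕ) = 0 then 1 else 0)
    (k : Fin n → ℝ)
    (P : Matrix (Fin n) (Fin n) ℝ) (hP : P.PosDef)
    (μ K₁ K₂ : ℝ) (hμ : 0 < μ) (hK₁ : 0 < K₁) (hK₂ : 0 < K₂)
    (hLyap : ∀ z : Fin n → ℝ,
      z ⬝ᵥ ((P * (A + Matrix.vecMulVec k c) + (A + Matrix.vecMulVec k c)ᵀ * P) *ᵥ z)
        ≤ -2 * μ * ∑ i, z i ^ 2)
    (hPbounds : ∀ z : Fin n → ℝ,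
      K₁ * ∑ i, z i ^ 2 ≤ z ⬝ᵥ (P *ᵥ z) ∧ z ⬝ᵥ (P *ᵥ z) ≤ K₂ * ∑ i, z i ^ 2)
    (θ : ℝ)
    (hθ : max 1 (2 * ‖Matrix.toEuclideanCLM (𝕜 := ℝ) P‖ * L * Real.sqrt n / μ) ≤ θ)
    (v : ℝ → ℝ) (hv : ContinuousOn v (Set.Ici 0))
    (hvbdd : ∃ M, ∀ t, 0 ≤ t → |v t| ≤ M)
    (x z : ℝ → Fin n → ℝ)
    (hx : ∀ t, 0 ≤ t → ∀ i, HasDerivAt (fun s => x s i)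
      (f i (x t) + if h : (i : ℕ) + 1 < n then x t ⟨(i : ℕ) + 1, h⟩ else 0) t)
    (hz : ∀ t, 0 ≤ t → ∀ i, HasDerivAt (fun s => z s i)
      (f i (z t) + (if h : (i : ℕ) + 1 < n then z t ⟨(i : ℕ) + 1, h⟩ else 0)
        + θ ^ ((i : ℕ) + 1) * k i * (z t ⟨0, by omega⟩ - x t ⟨0, by omega⟩ + v t)) t) :
    ∀ t, 0 ≤ t →
      |f ⟨0, by omega⟩ (z t) + z t ⟨1, by omega⟩ - f ⟨0, by omega⟩ (x t) - x t ⟨1, by omega⟩| ≤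
        (L + θ) * Real.sqrt (K₂ / K₁)
            * Real.exp (-(θ * μ * t / (4 * ‖Matrix.toEuclideanCLM (𝕜 := ℝ) P‖)))
            * Real.sqrt (∑ i, (z 0 i - x 0 i) ^ 2)
          + 2 * (L + θ)
            * (‖Matrix.toEuclideanCLM (𝕜 := ℝ) P‖ * Real.sqrt (∑ i, k i ^ 2) / μ)
            * Real.sqrt (K₂ / K₁) * sSup ((fun τ => |v τ|) '' Set.Icc 0 t) := by
  intro T hT
  have h0n : 0 < n := by omega
  have h1n : 1 < n := by omega
  set Pn := ‖Matrix.toEuclideanCLM (𝕜 := ℝ) P‖ with hPndef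
  have hθ1 : (1:ℝ) ≤ θ := le_trans (le_max_left _ _) hθ
  have hθ0 : (0:ℝ) < θ := lt_of_lt_of_le one_pos hθ1
  have hθμ : 2 * Pn * L * Real.sqrt n ≤ θ * μ := by
    have := le_trans (le_max_right _ _) hθ
    rw [div_le_iff₀ hμ] at this
    linarith
  have hsym : ∀ i j, P i j = P j i := by
    intro i j
    have h := hP.isHermitian
    have h2 := congrFun (congrFun h j) i
    simpa [Matrix.conjTranspose_apply] using h2
  have hpsd : ∀ u : Fin n → ℝ, 0 ≤ u ⬝ᵥ (P *ᵥ u) := fun u =>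
    le_trans (mul_nonneg hK₁.le (Finset.sum_nonneg fun i _ => sq_nonneg _)) (hPbounds u).1
  have hPnK₂ : Pn ≤ K₂ := opnorm_le_of_quad hK₂.le hsym hpsd (fun u => (hPbounds u).2)
  have hK₁Pn : K₁ ≤ Pn := by
    set u : Fin n → ℝ := fun j => if j = ⟨0, h0n⟩ then 1 else 0 with hu
    have hsum : ∑ i, u i ^ 2 = 1 := by
      rw [hu, Finset.sum_eq_single (⟨0, h0n⟩ : Fin n)]
      · simp
      · intro j _ hj; simp [if_neg hj]
      · simp
    have h1 := (hPbounds u).1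
    have h2 := le_trans (le_abs_self _) (abs_dot_mulVec_le P u u)
    rw [hsum] at h1 h2
    rw [Real.sqrt_one] at h2
    linarith
  have hPn0 : 0 < Pn := lt_of_lt_of_le hK₁ hK₁Pn
  -- sup of |v|
  set S := sSup ((fun τ => |v τ|) '' Set.Icc (0:ℝ) T) with hSdef
  have hvS : ∀ τ ∈ Set.Icc (0:ℝ) T, |v τ| ≤ S := by
    obtain ⟨M, hM⟩ := hvbdd
    intro τ hτ
    apply le_csSup
    · refine ⟨M, ?_⟩
      rintro y ⟨σ, hσ, rfl⟩
      exact hM σ hσ.1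
    · exact ⟨τ, hτ, rfl⟩
  have hS0 : 0 ≤ S := le_trans (abs_nonneg _) (hvS 0 ⟨le_refl _, hT⟩)
  -- scaled error
  set ε : ℝ → Fin n → ℝ := fun t i => (θ ^ (i:ℕ))⁻¹ * (z t i - x t i) with hεdef
  set δ : ℝ → Fin n → ℝ := fun t i => (θ ^ (i:ℕ))⁻¹ * (f i (z t) - f i (x t)) with hδdef
  set Dε : ℝ → Fin n → ℝ := fun t i => δ t i
    + θ * (if h : (i:ℕ) + 1 < n then ε t ⟨(i:ℕ)+1, h⟩ else 0)
    + θ * k i * (ε t ⟨0, h0n⟩ + v t) with hDεdef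
  have hεderiv : ∀ t, 0 ≤ t → ∀ i, HasDerivAt (fun s => ε s i) (Dε t i) t := by
    intro t ht i
    have hd := ((hz t ht i).sub (hx t ht i)).const_mul ((θ ^ (i:ℕ))⁻¹)
    convert hd using 1
    · rfl
    · rfl
    · rfl
    simp only [hDεdef, hδdef, hεdef]
    have hθi : θ ^ (i:ℕ) ≠ 0 := pow_ne_zero _ hθ0.ne'
    by_cases h : (i:ℕ) + 1 < n
    · rw [dif_pos h, dif_pos h, dif_pos h]
      have hpow : θ ^ ((i:ℕ)+1) = θ ^ (i:ℕ) * θ := pow_succ θ _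
      field_simp
      ring
    · rw [dif_neg h, dif_neg h, dif_neg h]
      field_simp
      ring
  set N : ℝ → ℝ := fun t => ∑ i, ε t i ^ 2 with hNdef
  have hN0 : ∀ t, 0 ≤ N t := fun t => Finset.sum_nonneg fun i _ => sq_nonneg _
  set V : ℝ → ℝ := fun t => ε t ⬝ᵥ (P *ᵥ ε t) with hVdef
  have hVderiv : ∀ t, 0 ≤ t → HasDerivAt V (2 * (ε t ⬝ᵥ (P *ᵥ Dε t))) t := by
    intro t ht
    have key : HasDerivAt (fun s => ∑ i, ∑ j, P i j * (ε s i * ε s j))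
        (∑ i, ∑ j, P i j * (Dε t i * ε t j + ε t i * Dε t j)) t := by
      apply HasDerivAt.fun_sum
      intro i _
      apply HasDerivAt.fun_sum
      intro j _
      exact ((hεderiv t ht i).mul (hεderiv t ht j)).const_mul (P i j)
    have hVeq : V = fun s => ∑ i, ∑ j, P i j * (ε s i * ε s j) := by
      funext s
      simp only [hVdef, dotProduct, mulVec, Finset.mul_sum]
      exact Finset.sum_congr rfl fun i _ => Finset.sum_congr rfl fun j _ => by ring
    rw [hVeq]
    convert key using 1
    have h1 : ε t ⬝ᵥ (P *ᵥ Dε t) = ∑ i, ∑ j, P i j * (ε t i * Dε t j) := by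
      simp only [dotProduct, mulVec, Finset.mul_sum]
      exact Finset.sum_congr rfl fun i _ => Finset.sum_congr rfl fun j _ => by ring
    have h2 : Dε t ⬝ᵥ (P *ᵥ ε t) = ∑ i, ∑ j, P i j * (Dε t i * ε t j) := by
      simp only [dotProduct, mulVec, Finset.mul_sum]
      exact Finset.sum_congr rfl fun i _ => Finset.sum_congr rfl fun j _ => by ring
    have h3 := sym_dot hsym (Dε t) (ε t)
    have h4 : (∑ i, ∑ j, P i j * (Dε t i * ε t j + ε t i * Dε t j))
        = (∑ i, ∑ j, P i j * (Dε t i * ε t j)) + ∑ i, ∑ j, P i j * (ε t i * Dε t j) := by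
      rw [← Finset.sum_add_distrib]
      refine Finset.sum_congr rfl fun i _ => ?_
      rw [← Finset.sum_add_distrib]
      exact Finset.sum_congr rfl fun j _ => by ring
    rw [h4, ← h1, ← h2, h3]
    ring
  have hVN : ∀ t, V t ≤ Pn * N t := by
    intro t
    calc V t ≤ |ε t ⬝ᵥ (P *ᵥ ε t)| := le_abs_self _
      _ ≤ Pn * Real.sqrt (N t) * Real.sqrt (N t) := abs_dot_mulVec_le P _ _
      _ = Pn * N t := by rw [mul_assoc, Real.mul_self_sqrt (hN0 t)]
  -- derivative bound
  set a : ℝ := θ * μ / (2 * Pn) with hadef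
  set C : ℝ := 2 * θ * Pn ^ 2 * (∑ i, k i ^ 2) * S ^ 2 / μ with hCdef
  have ha0 : 0 < a := by positivity
  have hC0 : 0 ≤ C := by positivity
  have hkn2 : Real.sqrt (∑ i, k i ^ 2) ^ 2 = ∑ i, k i ^ 2 :=
    Real.sq_sqrt (Finset.sum_nonneg fun i _ => sq_nonneg _)
  have heε : ∀ s, ∀ j : Fin n, z s j - x s j = θ ^ (j:ℕ) * ε s j := by
    intro s j
    simp only [hεdef]
    field_simp
  have hbound : ∀ t ∈ Set.Icc (0:ℝ) T, 2 * (ε t ⬝ᵥ (P *ᵥ Dε t)) ≤ -a * V t + C := by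
    intro t ht
    set kn := Real.sqrt (∑ i, k i ^ 2) with hkndef
    have hkn0 : 0 ≤ kn := Real.sqrt_nonneg _
    set M := A + Matrix.vecMulVec k c with hMdef
    have hMmul : ∀ w : Fin n → ℝ, ∀ i : Fin n, (M *ᵥ w) i
        = (if h : (i:ℕ)+1 < n then w ⟨(i:ℕ)+1, h⟩ else 0) + k i * w ⟨0, h0n⟩ := by
      intro w i
      rw [hMdef, Matrix.add_mulVec, Pi.add_apply]
      congr 1
      · simp only [mulVec, dotProduct, hA]
        by_cases h : (i:ℕ)+1 < n
        · rw [dif_pos h, Finset.sum_eq_single (⟨(i:ℕ)+1, h⟩ : Fin n)]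
          · simp
          · intro j _ hj
            rw [if_neg, zero_mul]
            intro hcc; exact hj (Fin.ext hcc)
          · simp
        · rw [dif_neg h]
          apply Finset.sum_eq_zero
          intro j _
          rw [if_neg, zero_mul]
          intro hcc; exact h (hcc ▸ j.isLt)
      · simp only [mulVec, dotProduct, Matrix.vecMulVec_apply, hc]
        rw [Finset.sum_eq_single (⟨0, h0n⟩ : Fin n)]
        · simp
        · intro j _ hj
          have hj0 : (j:ℕ) ≠ 0 := fun hcc => hj (Fin.ext hcc)
          simp [hj0]
        · simp
    have hdec : Dε t = δ t + θ • (M *ᵥ ε t) + (θ * v t) • k := by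
      funext i
      simp only [Pi.add_apply, Pi.smul_apply, smul_eq_mul]
      rw [hMmul (ε t) i]
      simp only [hDεdef]
      ring
    have hsplit : ε t ⬝ᵥ (P *ᵥ Dε t)
        = ε t ⬝ᵥ (P *ᵥ δ t) + θ * (ε t ⬝ᵥ (P *ᵥ (M *ᵥ ε t)))
          + (θ * v t) * (ε t ⬝ᵥ (P *ᵥ k)) := by
      rw [hdec, Matrix.mulVec_add, Matrix.mulVec_add, Matrix.mulVec_smul, Matrix.mulVec_smul,
        dotProduct_add, dotProduct_add, dotProduct_smul, dotProduct_smul, smul_eq_mul,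
        smul_eq_mul]
    have hlyap2 : 2 * (ε t ⬝ᵥ (P *ᵥ (M *ᵥ ε t))) ≤ -2 * μ * N t := by
      have h1 : ε t ⬝ᵥ ((P * M) *ᵥ ε t) = ε t ⬝ᵥ (P *ᵥ (M *ᵥ ε t)) := by
        rw [← Matrix.mulVec_mulVec]
      have h2 : ε t ⬝ᵥ ((Mᵀ * P) *ᵥ ε t) = ε t ⬝ᵥ (P *ᵥ (M *ᵥ ε t)) := by
        rw [← Matrix.mulVec_mulVec, Matrix.dotProduct_mulVec, Matrix.vecMul_transpose,
          sym_dot hsym]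
      have h := hLyap (ε t)
      rw [Matrix.add_mulVec, dotProduct_add, h1, h2] at h
      have hNt : ∑ i, ε t i ^ 2 = N t := rfl
      rw [hNt] at h
      linarith
    have hδs : Real.sqrt (∑ i, δ t i ^ 2) ≤ L * Real.sqrt n * Real.sqrt (N t) := by
      have hper : ∀ i : Fin n, δ t i ^ 2 ≤ (L * Real.sqrt (N t)) ^ 2 := by
        intro i
        have habs : |δ t i| ≤ L * Real.sqrt (N t) := by
          have hf := hfLip i (z t) (x t)
          have hsum : ∑ j ∈ Finset.univ.filter (fun j => j ≤ i), (z t j - x t j) ^ 2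
              ≤ θ ^ (2 * (i:ℕ)) * N t := by
            calc ∑ j ∈ Finset.univ.filter (fun j => j ≤ i), (z t j - x t j) ^ 2
                ≤ ∑ j ∈ Finset.univ.filter (fun j => j ≤ i), θ ^ (2*(i:ℕ)) * ε t j ^ 2 := by
                  apply Finset.sum_le_sum
                  intro j hj
                  have hji : (j:ℕ) ≤ (i:ℕ) := (Finset.mem_filter.mp hj).2
                  rw [heε t j, mul_pow, ← pow_mul]
                  have hpp : θ ^ ((j:ℕ)*2) ≤ θ ^ (2*(i:ℕ)) := by
                    apply pow_le_pow_right₀ hθ1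
                    omega
                  exact mul_le_mul_of_nonneg_right hpp (sq_nonneg _)
              _ = θ ^ (2*(i:ℕ)) * ∑ j ∈ Finset.univ.filter (fun j => j ≤ i), ε t j ^ 2 := by
                  rw [Finset.mul_sum]
              _ ≤ θ ^ (2*(i:ℕ)) * N t := by
                  apply mul_le_mul_of_nonneg_left _ (by positivity)
                  apply Finset.sum_le_sum_of_subset_of_nonneg (Finset.filter_subset _ _)
                  intro j _ _
                  exact sq_nonneg _
          have hs2 : Real.sqrt (∑ j ∈ Finset.univ.filter (fun j => j ≤ i), (z t j - x t j) ^ 2)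
              ≤ θ ^ (i:ℕ) * Real.sqrt (N t) := by
            calc Real.sqrt (∑ j ∈ Finset.univ.filter (fun j => j ≤ i), (z t j - x t j) ^ 2)
                ≤ Real.sqrt (θ ^ (2*(i:ℕ)) * N t) := Real.sqrt_le_sqrt hsum
              _ = θ ^ (i:ℕ) * Real.sqrt (N t) := by
                  rw [Real.sqrt_mul (by positivity), show 2*(i:ℕ) = (i:ℕ)*2 by ring,
                    pow_mul, Real.sqrt_sq (by positivity)]
          simp only [hδdef]
          rw [abs_mul, abs_inv, abs_pow, abs_of_pos hθ0]
          have hθi : (0:ℝ) < θ ^ (i:ℕ) := by positivity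
          rw [inv_mul_le_iff₀ hθi]
          calc |f i (z t) - f i (x t)|
              ≤ L * Real.sqrt (∑ j ∈ Finset.univ.filter (fun j => j ≤ i),
                  (z t j - x t j) ^ 2) := hf
            _ ≤ L * (θ ^ (i:ℕ) * Real.sqrt (N t)) := mul_le_mul_of_nonneg_left hs2 hL
            _ = θ ^ (i:ℕ) * (L * Real.sqrt (N t)) := by ring
        calc δ t i ^ 2 = |δ t i| ^ 2 := (sq_abs _).symm
          _ ≤ (L * Real.sqrt (N t)) ^ 2 := by
              apply pow_le_pow_left₀ (abs_nonneg _) habs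
      calc Real.sqrt (∑ i, δ t i ^ 2)
          ≤ Real.sqrt (∑ _i : Fin n, (L * Real.sqrt (N t)) ^ 2) :=
            Real.sqrt_le_sqrt (Finset.sum_le_sum fun i _ => hper i)
        _ = Real.sqrt ((n:ℝ) * (L * Real.sqrt (N t)) ^ 2) := by
            rw [Finset.sum_const, Finset.card_univ, Fintype.card_fin, nsmul_eq_mul]
        _ = Real.sqrt n * (L * Real.sqrt (N t)) := by
            rw [Real.sqrt_mul (by positivity), Real.sqrt_sq (by positivity)]
        _ = L * Real.sqrt n * Real.sqrt (N t) := by ring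
    have hNsq : Real.sqrt (N t) * Real.sqrt (N t) = N t := Real.mul_self_sqrt (hN0 t)
    have hNt : ∑ i, ε t i ^ 2 = N t := rfl
    have hb1 : 2 * (ε t ⬝ᵥ (P *ᵥ δ t)) ≤ θ * μ * N t := by
      have h := abs_dot_mulVec_le P (ε t) (δ t)
      rw [← hPndef, hNt] at h
      have h2 : ε t ⬝ᵥ (P *ᵥ δ t)
          ≤ Pn * Real.sqrt (N t) * (L * Real.sqrt n * Real.sqrt (N t)) := by
        calc ε t ⬝ᵥ (P *ᵥ δ t) ≤ |ε t ⬝ᵥ (P *ᵥ δ t)| := le_abs_self _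
          _ ≤ Pn * Real.sqrt (N t) * Real.sqrt (∑ i, δ t i ^ 2) := h
          _ ≤ Pn * Real.sqrt (N t) * (L * Real.sqrt n * Real.sqrt (N t)) :=
              mul_le_mul_of_nonneg_left hδs (by positivity)
      have h3 : Pn * Real.sqrt (N t) * (L * Real.sqrt n * Real.sqrt (N t))
          = 2 * Pn * L * Real.sqrt n * (Real.sqrt (N t) * Real.sqrt (N t)) / 2 := by ring
      have h4 : 2 * Pn * L * Real.sqrt n * N t ≤ θ * μ * N t :=
        mul_le_mul_of_nonneg_right hθμ (hN0 t)
      rw [h3, hNsq] at h2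
      linarith
    have hb2 : 2 * ((θ * v t) * (ε t ⬝ᵥ (P *ᵥ k)))
        ≤ θ * ((μ/2) * N t + (2/μ) * Pn^2 * S^2 * kn^2) := by
      have h1 := abs_dot_mulVec_le P (ε t) k
      rw [← hPndef, hNt, ← hkndef] at h1
      have hvt : |v t| ≤ S := hvS t ht
      have h2 : |v t| * |ε t ⬝ᵥ (P *ᵥ k)| ≤ S * (Pn * Real.sqrt (N t) * kn) :=
        mul_le_mul hvt h1 (abs_nonneg _) hS0
      have key : 2 * (|v t| * |ε t ⬝ᵥ (P *ᵥ k)|)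
          ≤ (μ/2) * N t + (2/μ) * Pn^2 * S^2 * kn^2 := by
        have hsq := sq_nonneg (μ * Real.sqrt (N t) - 2 * Pn * S * kn)
        have hNN : Real.sqrt (N t) ^ 2 = N t := Real.sq_sqrt (hN0 t)
        have key0 : 2 * μ * (|v t| * |ε t ⬝ᵥ (P *ᵥ k)|)
            ≤ (μ^2/2) * N t + 2 * Pn^2 * S^2 * kn^2 := by
          nlinarith [mul_le_mul_of_nonneg_left h2 (by positivity : (0:ℝ) ≤ 2*μ), hsq, hNN]
        have h3 : (μ/2) * N t + (2/μ) * Pn^2 * S^2 * kn^2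
            = ((μ^2/2) * N t + 2 * Pn^2 * S^2 * kn^2) / μ := by
          field_simp
        rw [h3, le_div_iff₀ hμ]
        nlinarith [key0]
      have habs : v t * (ε t ⬝ᵥ (P *ᵥ k)) ≤ |v t| * |ε t ⬝ᵥ (P *ᵥ k)| := by
        rw [← abs_mul]
        exact le_abs_self _
      calc 2 * ((θ * v t) * (ε t ⬝ᵥ (P *ᵥ k)))
          = θ * (2 * (v t * (ε t ⬝ᵥ (P *ᵥ k)))) := by ring
        _ ≤ θ * (2 * (|v t| * |ε t ⬝ᵥ (P *ᵥ k)|)) := by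
            apply mul_le_mul_of_nonneg_left _ hθ0.le
            linarith
        _ ≤ θ * ((μ/2) * N t + (2/μ) * Pn^2 * S^2 * kn^2) :=
            mul_le_mul_of_nonneg_left key hθ0.le
    have hVleq : a * V t ≤ (θ * μ / 2) * N t := by
      calc a * V t ≤ a * (Pn * N t) := mul_le_mul_of_nonneg_left (hVN t) ha0.le
        _ = (θ * μ / 2) * N t := by
            rw [hadef]
            field_simp
    have hθlyap := mul_le_mul_of_nonneg_left hlyap2 hθ0.le
    have hCeq : θ * ((μ/2) * N t + (2/μ) * Pn^2 * S^2 * kn^2)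
        = (θ * μ / 2) * N t + C := by
      rw [hCdef, hkndef, hkn2]
      field_simp
    calc 2 * (ε t ⬝ᵥ (P *ᵥ Dε t))
        = 2 * (ε t ⬝ᵥ (P *ᵥ δ t)) + θ * (2 * (ε t ⬝ᵥ (P *ᵥ (M *ᵥ ε t))))
          + 2 * ((θ * v t) * (ε t ⬝ᵥ (P *ᵥ k))) := by
          rw [hsplit]; ring
      _ ≤ θ * μ * N t + θ * (-2 * μ * N t)
          + ((θ * μ / 2) * N t + C) := by
          rw [← hCeq]
          linarith [hb1, hb2, hθlyap]
      _ = -(θ * μ / 2) * N t + C := by ring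
      _ ≤ -a * V t + C := by linarith [hVleq]
  have hgron : V T ≤ Real.exp (-(a * T)) * V 0 + C / a :=
    gronwall_simple ha0 hC0 hT (fun t ht => hVderiv t ht.1) hbound
  -- final chain
  have hV0nn : 0 ≤ V 0 := hpsd (ε 0)
  have hCa0 : 0 ≤ C / a := div_nonneg hC0 ha0.le
  have hfilter : Finset.univ.filter (fun j => j ≤ (⟨0, h0n⟩ : Fin n))
      = {(⟨0, h0n⟩ : Fin n)} := by
    ext j
    simp only [Finset.mem_filter, Finset.mem_univ, true_and, Finset.mem_singleton,
      Fin.le_def, Fin.ext_iff]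
    omega
  have hF1 : |f ⟨0, h0n⟩ (z T) - f ⟨0, h0n⟩ (x T)|
      ≤ L * |z T ⟨0, h0n⟩ - x T ⟨0, h0n⟩| := by
    have hf := hfLip ⟨0, h0n⟩ (z T) (x T)
    rw [hfilter, Finset.sum_singleton, Real.sqrt_sq_eq_abs] at hf
    exact hf
  have htri : |f ⟨0, h0n⟩ (z T) + z T ⟨1, h1n⟩ - f ⟨0, h0n⟩ (x T) - x T ⟨1, h1n⟩|
      ≤ |f ⟨0, h0n⟩ (z T) - f ⟨0, h0n⟩ (x T)| + |z T ⟨1, h1n⟩ - x T ⟨1, h1n⟩| := by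
    have heq : f ⟨0, h0n⟩ (z T) + z T ⟨1, h1n⟩ - f ⟨0, h0n⟩ (x T) - x T ⟨1, h1n⟩
        = (f ⟨0, h0n⟩ (z T) - f ⟨0, h0n⟩ (x T)) + (z T ⟨1, h1n⟩ - x T ⟨1, h1n⟩) := by ring
    rw [heq]
    exact abs_add_le _ _
  have he0 : z T ⟨0, h0n⟩ - x T ⟨0, h0n⟩ = ε T ⟨0, h0n⟩ := by
    rw [heε T ⟨0, h0n⟩]
    norm_num
  have he1 : z T ⟨1, h1n⟩ - x T ⟨1, h1n⟩ = θ * ε T ⟨1, h1n⟩ := by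
    rw [heε T ⟨1, h1n⟩]
    norm_num
  have hcoord : ∀ i : Fin n, |ε T i| ≤ Real.sqrt (N T) := by
    intro i
    rw [← Real.sqrt_sq_eq_abs]
    apply Real.sqrt_le_sqrt
    exact Finset.single_le_sum (fun j _ => sq_nonneg (ε T j)) (Finset.mem_univ i)
  have hmain : |f ⟨0, h0n⟩ (z T) + z T ⟨1, h1n⟩ - f ⟨0, h0n⟩ (x T) - x T ⟨1, h1n⟩|
      ≤ (L + θ) * Real.sqrt (N T) := by
    have h1 : |z T ⟨1, h1n⟩ - x T ⟨1, h1n⟩| = θ * |ε T ⟨1, h1n⟩| := by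
      rw [he1, abs_mul, abs_of_pos hθ0]
    rw [he0] at hF1
    calc |f ⟨0, h0n⟩ (z T) + z T ⟨1, h1n⟩ - f ⟨0, h0n⟩ (x T) - x T ⟨1, h1n⟩|
        ≤ |f ⟨0, h0n⟩ (z T) - f ⟨0, h0n⟩ (x T)| + |z T ⟨1, h1n⟩ - x T ⟨1, h1n⟩| := htri
      _ ≤ L * |ε T ⟨0, h0n⟩| + θ * |ε T ⟨1, h1n⟩| := by rw [h1]; linarith
      _ ≤ L * Real.sqrt (N T) + θ * Real.sqrt (N T) := by
          have ha1 := mul_le_mul_of_nonneg_left (hcoord ⟨0, h0n⟩) hL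
          have ha2 := mul_le_mul_of_nonneg_left (hcoord ⟨1, h1n⟩) hθ0.le
          linarith
      _ = (L + θ) * Real.sqrt (N T) := by ring
  have hsplit2 : Real.sqrt (N T)
      ≤ Real.sqrt (Real.exp (-(a*T)) * V 0 / K₁) + Real.sqrt (C/a/K₁) := by
    have hKN : K₁ * N T ≤ V T := (hPbounds (ε T)).1
    have h1 : N T ≤ (Real.exp (-(a*T)) * V 0 + C/a)/K₁ := by
      rw [le_div_iff₀ hK₁]
      nlinarith [hgron, hKN]
    calc Real.sqrt (N T) ≤ Real.sqrt ((Real.exp (-(a*T)) * V 0 + C/a)/K₁) :=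
        Real.sqrt_le_sqrt h1
      _ = Real.sqrt (Real.exp (-(a*T)) * V 0/K₁ + C/a/K₁) := by rw [add_div]
      _ ≤ _ := sqrt_add_le' (by positivity) (by positivity)
  have hN0E : N 0 ≤ ∑ i, (z 0 i - x 0 i) ^ 2 := by
    apply Finset.sum_le_sum
    intro i _
    have h1 : (1:ℝ) ≤ θ ^ ((i:ℕ)*2) := one_le_pow₀ hθ1
    rw [heε 0 i]
    have h2 : (θ ^ (i:ℕ)) ^ 2 = θ ^ ((i:ℕ)*2) := (pow_mul θ _ 2).symm
    nlinarith [sq_nonneg (ε 0 i), h1, h2]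
  have hV0' : V 0 ≤ K₂ * ∑ i, (z 0 i - x 0 i) ^ 2 := by
    have h1 : V 0 ≤ K₂ * N 0 := (hPbounds (ε 0)).2
    have h2 := mul_le_mul_of_nonneg_left hN0E hK₂.le
    linarith
  have hterm1 : Real.sqrt (Real.exp (-(a*T)) * V 0 / K₁)
      ≤ Real.exp (-(θ*μ*T/(4*Pn)))
        * (Real.sqrt (K₂/K₁) * Real.sqrt (∑ i, (z 0 i - x 0 i) ^ 2)) := by
    have h1 : Real.exp (-(a*T)) * V 0 / K₁ = Real.exp (-(a*T)) * (V 0 / K₁) := by ring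
    rw [h1, Real.sqrt_mul (Real.exp_nonneg _)]
    have h2 : Real.sqrt (Real.exp (-(a*T))) = Real.exp (-(θ*μ*T/(4*Pn))) := by
      rw [← Real.exp_half]
      congr 1
      rw [hadef]
      field_simp
      ring_nf
    rw [h2]
    apply mul_le_mul_of_nonneg_left _ (Real.exp_nonneg _)
    have h3 : V 0 / K₁ ≤ (K₂/K₁) * ∑ i, (z 0 i - x 0 i) ^ 2 := by
      rw [div_mul_eq_mul_div]
      gcongr
    calc Real.sqrt (V 0 / K₁) ≤ Real.sqrt ((K₂/K₁) * ∑ i, (z 0 i - x 0 i) ^ 2) :=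
        Real.sqrt_le_sqrt h3
      _ = Real.sqrt (K₂/K₁) * Real.sqrt (∑ i, (z 0 i - x 0 i) ^ 2) :=
        Real.sqrt_mul (by positivity) _
  have hCa : C / a = 4 * Pn^3 * (∑ i, k i ^ 2) * S^2 / μ^2 := by
    rw [hCdef, hadef]
    field_simp
    ring
  have hterm2 : Real.sqrt (C/a/K₁)
      ≤ 2 * (Pn * Real.sqrt (∑ i, k i ^ 2) / μ) * Real.sqrt (K₂/K₁) * S := by
    have hrhs0 : 0 ≤ 2 * (Pn * Real.sqrt (∑ i, k i ^ 2) / μ) * Real.sqrt (K₂/K₁) * S := by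
      positivity
    rw [← Real.sqrt_sq hrhs0]
    apply Real.sqrt_le_sqrt
    have hsqK : Real.sqrt (K₂/K₁) ^ 2 = K₂/K₁ := Real.sq_sqrt (by positivity)
    have heq : (2 * (Pn * Real.sqrt (∑ i, k i ^ 2) / μ) * Real.sqrt (K₂/K₁) * S) ^ 2
        = 4 * Pn^2 * K₂ * (∑ i, k i ^ 2) * S^2 / (μ^2 * K₁) := by
      rw [mul_pow, mul_pow, mul_pow, div_pow, mul_pow, hsqK, hkn2]
      field_simp
      ring_nf
    rw [heq, hCa, div_div]
    apply div_le_div_of_nonneg_right ?_ (by positivity)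
    nlinarith [mul_le_mul_of_nonneg_left hPnK₂
      (by positivity : (0:ℝ) ≤ 4 * Pn^2 * (∑ i, k i ^ 2) * S^2)]
  calc |f ⟨0, h0n⟩ (z T) + z T ⟨1, h1n⟩ - f ⟨0, h0n⟩ (x T) - x T ⟨1, h1n⟩|
      ≤ (L + θ) * Real.sqrt (N T) := hmain
    _ ≤ (L + θ) * (Real.exp (-(θ*μ*T/(4*Pn)))
          * (Real.sqrt (K₂/K₁) * Real.sqrt (∑ i, (z 0 i - x 0 i) ^ 2))
        + 2 * (Pn * Real.sqrt (∑ i, k i ^ 2) / μ) * Real.sqrt (K₂/K₁) * S) := by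
        apply mul_le_mul_of_nonneg_left _ (by positivity : (0:ℝ) ≤ L + θ)
        calc Real.sqrt (N T)
            ≤ Real.sqrt (Real.exp (-(a*T)) * V 0 / K₁) + Real.sqrt (C/a/K₁) := hsplit2
          _ ≤ _ := add_le_add hterm1 hterm2
    _ = (L + θ) * Real.sqrt (K₂ / K₁) * Real.exp (-(θ * μ * T / (4 * Pn)))
          * Real.sqrt (∑ i, (z 0 i - x 0 i) ^ 2)
        + 2 * (L + θ) * (Pn * Real.sqrt (∑ i, k i ^ 2) / μ) * Real.sqrt (K₂ / K₁) * S := by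
        ring
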